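/- Let (α_n) be a decreasing positive sequence tending to 0 and A = {α_n e_n} ⊂ ℓ_p for p ∈ [1,∞] (ℓ_∞ meaning c₀). Then the dual thickness satisfies τ*(A) ≤ d_B(A). -/

import Mathlib

open Filter Metric Set Pointwise Topology ENNReal

/-- `coverNum X ε` : minimal number of balls of radius `ε` with centres in `X` covering `X`. -/
noncomputable def coverNum {E : Type*} [SeminormedAddCommGroup E] (X : Set E) (ε : ℝ) : ℕ∞ :=
  sInf {n : ℕ∞ | ∃ F : Finset E, ↑F ⊆ X ∧ (X ⊆ ⋃ c ∈ F, Metric.ball c ε) ∧ n = F.card}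

/-- extended logarithm of an extended natural number. -/
noncomputable def elog (n : ℕ∞) : EReal :=
  if n = ⊤ then ⊤ else ((Real.log n.toNat : ℝ) : EReal)

/-- The upper box-counting dimension `d_B(X) = limsup_{ε → 0⁺} log N(X,ε) / (-log ε)`. -/
noncomputable def dimBox {E : Type*} [SeminormedAddCommGroup E] (X : Set E) : EReal :=
  Filter.limsup (fun ε : ℝ => elog (coverNum X ε) / ((-Real.log ε : ℝ) : EReal)) (𝓝[>] 0)

/-- `thickNum X ε` : smallest dimension of a finite-dimensional subspace `V` with
`dist(x, V) ≤ ε` for all `x ∈ X` (`⊤` if none exists). -/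
noncomputable def thickNum {E : Type*} [NormedAddCommGroup E] [NormedSpace ℝ E]
    (X : Set E) (ε : ℝ) : ℕ∞ :=
  sInf {n : ℕ∞ | ∃ V : Submodule ℝ E, FiniteDimensional ℝ V ∧ n = Module.finrank ℝ V ∧
    ∀ x ∈ X, Metric.infDist x (V : Set E) ≤ ε}

/-- The thickness exponent `τ(X) = limsup_{ε → 0⁺} log d(X,ε) / (-log ε)`. -/
noncomputable def thickness {E : Type*} [NormedAddCommGroup E] [NormedSpace ℝ E]
    (X : Set E) : EReal :=
  Filter.limsup (fun ε : ℝ => elog (thickNum X ε) / ((-Real.log ε : ℝ) : EReal)) (𝓝[>] 0)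

/-- `dualThickNum X θ ε` : minimal dimension of a subspace `U ⊆ E*` such that for all
`x, y ∈ X` with `‖x - y‖ ≥ ε` some `φ ∈ U` has `|φ(x-y)| ≥ ε^(1+θ)`. -/
noncomputable def dualThickNum {E : Type*} [NormedAddCommGroup E] [NormedSpace ℝ E]
    (X : Set E) (θ ε : ℝ) : ℕ∞ :=
  sInf {n : ℕ∞ | ∃ U : Submodule ℝ (E →L[ℝ] ℝ), FiniteDimensional ℝ U ∧ n = Module.finrank ℝ U ∧
    ∀ x ∈ X, ∀ y ∈ X, ε ≤ ‖x - y‖ → ∃ φ ∈ U, ε ^ (1 + θ) ≤ |φ (x - y)|}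

noncomputable def dualThickTheta {E : Type*} [NormedAddCommGroup E] [NormedSpace ℝ E]
    (X : Set E) (θ : ℝ) : EReal :=
  Filter.limsup (fun ε : ℝ => elog (dualThickNum X θ ε) / ((-Real.log ε : ℝ) : EReal)) (𝓝[>] 0)

/-- The dual thickness `τ*(X) = lim_{θ → 0⁺} τ*_θ(X)` (the limit exists by monotonicity and
equals the limsup as `θ → 0⁺`). -/
noncomputable def dualThickness {E : Type*} [NormedAddCommGroup E] [NormedSpace ℝ E]
    (X : Set E) : EReal :=
  Filter.limsup (fun θ : ℝ => dualThickTheta X θ) (𝓝[>] 0)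

/-- `sigmaNum X α ε` : minimal dimension of a subspace `V ⊆ E*` such that whenever
`x, y ∈ X` with `‖x - y‖ ≥ ε` there is `Φ ∈ V` with `‖Φ‖ = 1` and `|Φ(x-y)| ≥ α ε`. -/
noncomputable def sigmaNum {E : Type*} [NormedAddCommGroup E] [NormedSpace ℝ E]
    (X : Set E) (α ε : ℝ) : ℕ∞ :=
  sInf {n : ℕ∞ | ∃ V : Submodule ℝ (E →L[ℝ] ℝ), FiniteDimensional ℝ V ∧ n = Module.finrank ℝ V ∧
    ∀ x ∈ X, ∀ y ∈ X, ε ≤ ‖x - y‖ → ∃ Φ ∈ V, ‖Φ‖ = 1 ∧ α * ε ≤ |Φ (x - y)|}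

noncomputable def sigmaExp {E : Type*} [NormedAddCommGroup E] [NormedSpace ℝ E]
    (X : Set E) (α : ℝ) : EReal :=
  Filter.limsup (fun ε : ℝ => elog (sigmaNum X α ε) / ((-Real.log ε : ℝ) : EReal)) (𝓝[>] 0)


lemma elog_nonneg (n : ℕ∞) : 0 ≤ elog n := by
  unfold elog
  split
  · exact le_top
  · rcases Nat.eq_zero_or_pos n.toNat with h | h
    · simp [h]
    · exact_mod_cast Real.log_natCast_nonneg _

lemma log_natCast_mono {m n : ℕ} (h : m ≤ n) : Real.log m ≤ Real.log n := by
  rcases Nat.eq_zero_or_pos m with hm | hm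
  · simp [hm]; exact Real.log_natCast_nonneg _
  · exact Real.log_le_log (by exact_mod_cast hm) (by exact_mod_cast h)

lemma elog_ne_top {n : ℕ∞} (h : n ≠ ⊤) : elog n = ((Real.log n.toNat : ℝ) : EReal) := by
  unfold elog; rw [if_neg h]

lemma elog_mono : Monotone elog := by
  intro a b hab
  rcases eq_or_ne b ⊤ with rfl | hb
  · simp [elog]
  · have ha : a ≠ ⊤ := fun h => hb (top_le_iff.mp (h ▸ hab))
    rw [elog_ne_top ha, elog_ne_top hb]
    exact_mod_cast log_natCast_mono (ENat.toNat_le_toNat hab hb)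

noncomputable def coordCLM (p : ℝ≥0∞) [Fact (1 ≤ p)] (i : ℕ) :
    lp (fun _ : ℕ => ℝ) p →L[ℝ] ℝ :=
  LinearMap.mkContinuous
    { toFun := fun f => f i
      map_add' := fun f g => by simp [lp.coeFn_add]
      map_smul' := fun c f => by simp [lp.coeFn_smul] }
    1 (fun f => by
      have hp0 : p ≠ 0 := (lt_of_lt_of_le zero_lt_one Fact.out).ne'
      rw [one_mul]; exact lp.norm_apply_le_norm hp0 f i)

@[simp] lemma coordCLM_apply (p : ℝ≥0∞) [Fact (1 ≤ p)] (i : ℕ) (f : lp (fun _ : ℕ => ℝ) p) :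
    coordCLM p i f = f i := rfl

lemma le_coe_of_forall_lt {X : EReal} {d : ℝ} (h : ∀ η : ℝ, 0 < η → X ≤ ((d + η : ℝ) : EReal)) :
    X ≤ (d : EReal) := by
  induction X with
  | bot => exact bot_le
  | coe x =>
      have : ∀ η : ℝ, 0 < η → x ≤ d + η := fun η hη => by exact_mod_cast h η hη
      exact_mod_cast le_of_forall_pos_le_add this
  | top =>
      exfalso
      exact ((h 1 one_pos).trans_lt (EReal.coe_lt_top _)).ne rfl

lemma tendsto_half : Tendsto (fun ε : ℝ => ε / 2) (𝓝[>] 0) (𝓝[>] 0) := by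
  have h1 : Tendsto (fun ε : ℝ => ε / 2) (𝓝 0) (𝓝 0) := by
    simpa using (continuous_id.div_const (2:ℝ)).tendsto (0:ℝ)
  apply tendsto_nhdsWithin_of_tendsto_nhds_of_eventually_within _
    (h1.mono_left nhdsWithin_le_nhds)
  filter_upwards [self_mem_nhdsWithin] with ε (hε : (0:ℝ) < ε)
  exact half_pos hε

section lpfacts

variable (p : ℝ≥0∞) [Fact (1 ≤ p)] (α : ℕ → ℝ)

local notation "a" => fun n : ℕ => (lp.single p n (α n) : lp (fun _ : ℕ => ℝ) p)

lemma norm_a_le (k : ℕ) (hk : 0 ≤ α k) : ‖(a) k‖ ≤ α k := by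
  rcases eq_or_ne p ∞ with rfl | hp
  · refine lp.norm_le_of_forall_le hk fun j => ?_
    rcases eq_or_ne j k with rfl | hj
    · rw [lp.single_apply_self]; simp [abs_of_nonneg hk]
    · rw [lp.single_apply_ne _ _ _ hj]; simpa using hk
  · have hp' : 0 < p.toReal :=
      ENNReal.toReal_pos ((lt_of_lt_of_le zero_lt_one Fact.out).ne') hp
    have := lp.norm_single (E := fun _ : ℕ => ℝ) (p := p) (lt_of_lt_of_le zero_lt_one Fact.out) k (α k)
    rw [this, Real.norm_eq_abs, abs_of_nonneg hk]

lemma apply_a_sub (n m : ℕ) (hnm : n ≠ m) :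
    ((a) n - (a) m : lp (fun _ : ℕ => ℝ) p) n = α n := by
  have : ((a) n - (a) m : lp (fun _ : ℕ => ℝ) p) n = (a) n n - (a) m n := by
    rw [lp.coeFn_sub]; rfl
  rw [this, lp.single_apply_self, lp.single_apply_ne _ _ _ hnm, sub_zero]

lemma norm_a_sub_lower (hpos : ∀ n, 0 < α n) (n m : ℕ) (hnm : n ≠ m) :
    α n ≤ ‖((a) n - (a) m : lp (fun _ : ℕ => ℝ) p)‖ := by
  have hp0 : p ≠ 0 := (lt_of_lt_of_le zero_lt_one Fact.out).ne'
  have h := lp.norm_apply_le_norm hp0 ((a) n - (a) m) n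
  rw [apply_a_sub p α n m hnm] at h
  calc α n ≤ ‖α n‖ := le_abs_self _
  _ ≤ _ := h

lemma norm_a_sub_upper (hpos : ∀ n, 0 < α n) (n m : ℕ) :
    ‖((a) n - (a) m : lp (fun _ : ℕ => ℝ) p)‖ ≤ α n + α m :=
  (norm_sub_le _ _).trans
    (add_le_add (norm_a_le p α n (hpos n).le) (norm_a_le p α m (hpos m).le))

lemma a_injective (hpos : ∀ n, 0 < α n) : Function.Injective (a) := by
  intro n m h
  by_contra hnm
  have h1 : (a) n n = (a) m n := by rw [h]
  rw [lp.single_apply_self, lp.single_apply_ne _ _ _ hnm] at h1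
  exact (hpos n).ne' h1

end lpfacts

section counting

variable (p : ℝ≥0∞) [Fact (1 ≤ p)] (α : ℕ → ℝ)

local notation "a" => fun n : ℕ => (lp.single p n (α n) : lp (fun _ : ℕ => ℝ) p)

lemma apply_a_sub' (n m : ℕ) (hnm : n ≠ m) :
    ((a) n - (a) m : lp (fun _ : ℕ => ℝ) p) m = -α m := by
  have : ((a) n - (a) m : lp (fun _ : ℕ => ℝ) p) m = (a) n m - (a) m m := by
    rw [lp.coeFn_sub]; rfl
  rw [this, lp.single_apply_self, lp.single_apply_ne _ _ _ (Ne.symm hnm), zero_sub]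

lemma card_le_coverNum (hpos : ∀ n, 0 < α n) (δ : ℝ) (hδ : 0 < δ)
    (hfin : {n : ℕ | δ ≤ α n}.Finite) :
    (hfin.toFinset.card : ℕ∞) ≤ coverNum (Set.range (a)) δ := by
  apply le_sInf
  rintro b ⟨F, hFsub, hFcov, rfl⟩
  have key : ∀ n ∈ hfin.toFinset, (a) n ∈ F := by
    intro n hn
    rw [Set.Finite.mem_toFinset] at hn
    replace hn : δ ≤ α n := hn
    have hmem : (a) n ∈ Set.range (a) := Set.mem_range_self n
    obtain ⟨c, hcF, hc⟩ : ∃ c ∈ F, (a) n ∈ Metric.ball c δ := by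
      simpa using hFcov hmem
    obtain ⟨k, rfl⟩ := hFsub hcF
    rcases eq_or_ne k n with rfl | hk
    · exact hcF
    · exfalso
      have h1 : α n ≤ ‖((a) n - (a) k : lp (fun _ : ℕ => ℝ) p)‖ :=
        norm_a_sub_lower p α hpos n k (Ne.symm hk)
      have h2 : dist ((a) n) ((a) k) < δ := by
        simpa [Metric.mem_ball, dist_comm] using hc
      rw [dist_eq_norm] at h2
      linarith
  exact_mod_cast Nat.cast_le.2 (Finset.card_le_card_of_injOn (a) key
    (fun x _ y _ h => a_injective p α hpos h))

lemma dualThickNum_le_card (hpos : ∀ n, 0 < α n)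
    (θ ε : ℝ) (hε : 0 < ε) (hpow : ε ^ (1 + θ) ≤ ε / 2)
    (hfin : {n : ℕ | ε / 2 ≤ α n}.Finite) :
    dualThickNum (Set.range (a)) θ ε ≤ (hfin.toFinset.card : ℕ∞) := by
  classical
  set s : Finset (lp (fun _ : ℕ => ℝ) p →L[ℝ] ℝ) := hfin.toFinset.image (coordCLM p) with hs
  set U := Submodule.span ℝ (s : Set (lp (fun _ : ℕ => ℝ) p →L[ℝ] ℝ)) with hU
  have hprop : ∀ x ∈ Set.range (a), ∀ y ∈ Set.range (a), ε ≤ ‖x - y‖ →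
      ∃ φ ∈ U, ε ^ (1 + θ) ≤ |φ (x - y)| := by
    rintro x ⟨n, rfl⟩ y ⟨m, rfl⟩ hxy
    have hnm : n ≠ m := by
      rintro rfl
      rw [sub_self, norm_zero] at hxy
      linarith
    have hub : ‖((a) n - (a) m : lp (fun _ : ℕ => ℝ) p)‖ ≤ α n + α m :=
      norm_a_sub_upper p α hpos n m
    rcases le_total (α m) (α n) with hle | hle
    · have hn2 : ε / 2 ≤ α n := by linarith
      refine ⟨coordCLM p n, Submodule.subset_span ?_, ?_⟩
      · exact Finset.mem_coe.2 (Finset.mem_image.2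
          ⟨n, (Set.Finite.mem_toFinset hfin).2 hn2, rfl⟩)
      · rw [coordCLM_apply, apply_a_sub p α n m hnm]
        calc ε ^ (1 + θ) ≤ ε / 2 := hpow
          _ ≤ α n := hn2
          _ ≤ |α n| := le_abs_self _
    · have hm2 : ε / 2 ≤ α m := by linarith
      refine ⟨coordCLM p m, Submodule.subset_span ?_, ?_⟩
      · exact Finset.mem_coe.2 (Finset.mem_image.2
          ⟨m, (Set.Finite.mem_toFinset hfin).2 hm2, rfl⟩)
      · rw [coordCLM_apply, apply_a_sub' p α n m hnm, abs_neg]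
        calc ε ^ (1 + θ) ≤ ε / 2 := hpow
          _ ≤ α m := hm2
          _ ≤ |α m| := le_abs_self _
  have hUfd : FiniteDimensional ℝ U := FiniteDimensional.span_finset ℝ s
  have h1 : dualThickNum (Set.range (a)) θ ε ≤ (Module.finrank ℝ U : ℕ∞) :=
    sInf_le ⟨U, hUfd, rfl, hprop⟩
  refine h1.trans ?_
  have h2 : Module.finrank ℝ U ≤ hfin.toFinset.card :=
    (finrank_span_finset_le_card s).trans Finset.card_image_le
  exact_mod_cast h2

end counting

/-- for `A = {α_n e_n} ⊂ ℓ_p`, the dual thickness is bounded above by the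
box-counting dimension. -/
theorem dualThickness_orthogonal_seq_le (p : ℝ≥0∞) [Fact (1 ≤ p)]
    (α : ℕ → ℝ) (hpos : ∀ n, 0 < α n) (hdec : Antitone α)
    (hlim : Tendsto α atTop (𝓝 0)) :
    dualThickness (Set.range fun n : ℕ => (lp.single p n (α n) : lp (fun _ : ℕ => ℝ) p))
      ≤ dimBox (Set.range fun n : ℕ => (lp.single p n (α n) : lp (fun _ : ℕ => ℝ) p)) := by
  set A := Set.range fun n : ℕ => (lp.single p n (α n) : lp (fun _ : ℕ => ℝ) p) with hA
  have hfin : ∀ δ : ℝ, 0 < δ → {n : ℕ | δ ≤ α n}.Finite := by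
    intro δ hδ
    have h1 : ∀ᶠ n in atTop, α n < δ := hlim.eventually_lt_const hδ
    rw [← Nat.cofinite_eq_atTop, Filter.eventually_cofinite] at h1
    exact h1.subset fun n hn => not_lt.2 hn
  have hD0 : (0 : EReal) ≤ dimBox A := by
    refine le_limsup_of_frequently_le ?_
    apply Filter.Eventually.frequently
    filter_upwards [Ioo_mem_nhdsGT_of_mem (Set.left_mem_Ico.2 one_pos)] with ε hε
    refine EReal.div_nonneg (elog_nonneg _) ?_
    exact_mod_cast neg_nonneg.2 (Real.log_nonpos hε.1.le hε.2.le)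
  rcases eq_or_ne (dimBox A) ⊤ with htop | hne
  · rw [htop]; exact le_top
  have hbot : dimBox A ≠ ⊥ := fun h => by rw [h] at hD0; simp at hD0
  obtain ⟨d, hd⟩ : ∃ d : ℝ, dimBox A = (d : EReal) :=
    ⟨(dimBox A).toReal, (EReal.coe_toReal hne hbot).symm⟩
  have hd0 : 0 ≤ d := by
    rw [hd] at hD0; exact_mod_cast hD0
  -- key estimate for fixed θ
  have key : ∀ θ : ℝ, 0 < θ → ∀ η' : ℝ, 0 < η' →
      dualThickTheta A θ ≤ (((1 + θ) * (d + η') : ℝ) : EReal) := by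
    intro θ hθ η' hη'
    have hglt : Filter.limsup
        (fun δ : ℝ => elog (coverNum A δ) / ((-Real.log δ : ℝ) : EReal)) (𝓝[>] 0)
        < ((d + η' : ℝ) : EReal) := by
      have : dimBox A < ((d + η' : ℝ) : EReal) := by
        rw [hd]; exact_mod_cast lt_add_of_pos_right d hη'
      exact this
    have hg : ∀ᶠ δ in 𝓝[>] (0 : ℝ),
        elog (coverNum A δ) / ((-Real.log δ : ℝ) : EReal) < ((d + η' : ℝ) : EReal) :=
      Filter.eventually_lt_of_limsup_lt hglt
    have hghalf := tendsto_half.eventually hg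
    refine Filter.limsup_le_of_le (by isBoundedDefault) ?_
    have hc0 : (0 : ℝ) < (1 / 2 : ℝ) ^ (1 / θ) := Real.rpow_pos_of_pos (by norm_num) _
    filter_upwards [self_mem_nhdsWithin,
      Ioo_mem_nhdsGT_of_mem (Set.left_mem_Ico.2 one_pos),
      Ioo_mem_nhdsGT_of_mem (Set.left_mem_Ico.2 hc0), hghalf] with ε hε0' hε1 hεθ hgε
    replace hε0 : 0 < ε := hε0'
    have hεhalf : 0 < ε / 2 := half_pos hε0
    have hpowθ : ε ^ θ ≤ 1 / 2 := by
      have h1 : ε ^ θ ≤ ((1 / 2 : ℝ) ^ (1 / θ)) ^ θ :=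
        Real.rpow_le_rpow hε0.le hεθ.2.le hθ.le
      rwa [← Real.rpow_mul (by norm_num), one_div_mul_cancel hθ.ne', Real.rpow_one] at h1
    have hpow : ε ^ (1 + θ) ≤ ε / 2 := by
      rw [Real.rpow_add hε0, Real.rpow_one]
      calc ε * ε ^ θ ≤ ε * (1 / 2) := mul_le_mul_of_nonneg_left hpowθ hε0.le
        _ = ε / 2 := by ring
    have hn : dualThickNum A θ ε ≤ coverNum A (ε / 2) :=
      (dualThickNum_le_card p α hpos θ ε hε0 hpow (hfin _ hεhalf)).trans
        (card_le_coverNum p α hpos (ε / 2) hεhalf (hfin _ hεhalf))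
    set c : ℝ := -Real.log ε with hcdef
    set c' : ℝ := -Real.log (ε / 2) with hc'def
    have hc : 0 < c := by
      rw [hcdef, neg_pos]
      exact Real.log_neg hε0 hε1.2
    have hc' : 0 < c' := by
      rw [hc'def, neg_pos]
      exact Real.log_neg hεhalf (by linarith [hε1.2])
    have hlog2 : Real.log 2 ≤ θ * c := by
      have h1 : Real.log (ε ^ θ) ≤ Real.log (1 / 2) :=
        Real.log_le_log (Real.rpow_pos_of_pos hε0 θ) hpowθ
      rw [Real.log_rpow hε0, one_div, Real.log_inv] at h1
      rw [hcdef]; nlinarith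
    have hcc' : c' ≤ (1 + θ) * c := by
      have hld : Real.log (ε / 2) = Real.log ε - Real.log 2 :=
        Real.log_div hε0.ne' two_ne_zero
      rw [hc'def, hld, hcdef] at *
      nlinarith [hlog2]
    have hcovne : coverNum A (ε / 2) ≠ ⊤ := by
      intro h
      rw [h, show elog ⊤ = ⊤ from if_pos rfl,
        EReal.top_div_of_pos_ne_top (by exact_mod_cast hc') (EReal.coe_ne_top _)] at hgε
      exact not_top_lt hgε
    have hdualne : dualThickNum A θ ε ≠ ⊤ := fun h => hcovne (top_le_iff.1 (h ▸ hn))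
    set r : ℝ := Real.log ((coverNum A (ε / 2)).toNat) with hrdef
    set r₁ : ℝ := Real.log ((dualThickNum A θ ε).toNat) with hr₁def
    have hr0 : 0 ≤ r := by
      rw [hrdef]
      exact_mod_cast Real.log_natCast_nonneg _
    have hr₁r : r₁ ≤ r := log_natCast_mono (ENat.toNat_le_toNat hn hcovne)
    have hrc' : r / c' ≤ d + η' := by
      rw [elog_ne_top hcovne, ← EReal.coe_div] at hgε
      exact_mod_cast hgε.le
    rw [elog_ne_top hdualne, ← EReal.coe_div]
    refine EReal.coe_le_coe_iff.2 ?_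
    have h5 : r₁ / c ≤ r / c := by
      gcongr
    have h6 : r / c ≤ ((1 + θ) * r) / c' := by
      rw [div_le_div_iff₀ hc hc']
      nlinarith [mul_le_mul_of_nonneg_left hcc' hr0]
    have h8 : (1 + θ) * (r / c') ≤ (1 + θ) * (d + η') :=
      mul_le_mul_of_nonneg_left hrc' (by linarith)
    calc r₁ / c ≤ r / c := h5
      _ ≤ ((1 + θ) * r) / c' := h6
      _ = (1 + θ) * (r / c') := by ring
      _ ≤ (1 + θ) * (d + η') := h8
  rw [hd]
  apply le_coe_of_forall_lt
  intro η hη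
  have hden : (0 : ℝ) < d + η / 2 + 1 := by linarith
  set θ₀ : ℝ := (η / 2) / (d + η / 2 + 1) with hθ₀def
  have hθ₀ : 0 < θ₀ := div_pos (by linarith) hden
  have hmul : θ₀ * (d + η / 2 + 1) = η / 2 := by
    rw [hθ₀def]; field_simp
  refine Filter.limsup_le_of_le (by isBoundedDefault) ?_
  filter_upwards [Ioo_mem_nhdsGT_of_mem (Set.left_mem_Ico.2 hθ₀)] with θ hθ
  have h1 : dualThickTheta A θ ≤ (((1 + θ) * (d + η / 2) : ℝ) : EReal) :=
    key θ hθ.1 (η / 2) (by linarith)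
  refine h1.trans ?_
  refine EReal.coe_le_coe_iff.2 ?_
  nlinarith [hθ.1, hθ.2, hmul, hθ₀, hd0, hη,
    mul_le_mul_of_nonneg_right hθ.2.le (show (0:ℝ) ≤ d + η / 2 by linarith)]
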